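/- Suppose Hypothesis (H) holds, set c* := (a_2 − 2a_1 + a_1a_2)/(a_1a_2), and assume there is a jointly measurable function r : 𝕏 × 𝕏 → ℝ_+ such that R_x(dy) = r(x,y)·ν(dy) for ν-almost every x. Then (i) r(x,y) = r(y,x) for ν⊗ν-almost every (x,y) ∈ 𝕏², and (ii) r(x,y)·(r(y,z) − c*) = r(x,z)·(r(y,z) − c*) for ν⊗ν⊗ν-almost every (x,y,z) ∈ 𝕏³. -/

import Mathlib

open MeasureTheory ProbabilityTheory ENNReal

/-- A sequence `X` is exchangeable under `P`: every finite prefix has a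
permutation-invariant joint distribution. -/
def Exchangeable {Ω 𝕏 : Type*} [MeasurableSpace Ω] [MeasurableSpace 𝕏]
    (P : Measure Ω) (X : ℕ → Ω → 𝕏) : Prop :=
  ∀ (n : ℕ) (σ : Equiv.Perm (Fin n)),
    P.map (fun ω (i : Fin n) => X (σ i) ω) = P.map (fun ω (i : Fin n) => X i ω)

/-- The predictive distributions of `X` are
`ℙ(X_{n+1} ∈ ·  | X_1,…,X_n) = (1 - a_n) ν + (a_n/n) ∑_{i=1}^n R_{X_i}` a.s.,
expressed in disintegrated form: for every measurable `B ⊆ 𝕏` and every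
measurable set `A` of trajectories of the first `n` coordinates. -/
def PredEq {Ω 𝕏 : Type*} [MeasurableSpace Ω] [MeasurableSpace 𝕏]
    (P : Measure Ω) (X : ℕ → Ω → 𝕏) (ν : Measure 𝕏) (R : Kernel 𝕏 𝕏) (a : ℕ → ℝ) : Prop :=
  ∀ n : ℕ, 1 ≤ n → ∀ B : Set 𝕏, MeasurableSet B → ∀ A : Set (Fin n → 𝕏), MeasurableSet A →
    P {ω | (fun i : Fin n => X i ω) ∈ A ∧ X n ω ∈ B} =
      ∫⁻ x in A, (ENNReal.ofReal (1 - a n) * ν B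
          + (ENNReal.ofReal (a n) / (n : ℝ≥0∞)) * ∑ i : Fin n, R (x i) B)
        ∂(P.map (fun ω (i : Fin n) => X i ω))

/-- Hypothesis (H): `X` is exchangeable with marginal distribution `ν`, `R` is a
probability kernel, and the predictive distributions are as in `PredEq` with
constants `a n ∈ (0,1)`. -/
structure HypH {Ω 𝕏 : Type*} [MeasurableSpace Ω] [MeasurableSpace 𝕏]
    (P : Measure Ω) (X : ℕ → Ω → 𝕏) (ν : Measure 𝕏) (R : Kernel 𝕏 𝕏) (a : ℕ → ℝ) : Prop where
  probP : IsProbabilityMeasure P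
  probν : IsProbabilityMeasure ν
  markov : IsMarkovKernel R
  meas : ∀ n, Measurable (X n)
  exch : Exchangeable P X
  marginal : ∀ n, P.map (X n) = ν
  a_mem : ∀ n, 1 ≤ n → a n ∈ Set.Ioo (0 : ℝ) 1
  pred : PredEq P X ν R a

/-- `X` is a measure-valued Pólya urn sequence with parameters `(θ, ν, R)`. -/
def IsMVPS {Ω 𝕏 : Type*} [MeasurableSpace Ω] [MeasurableSpace 𝕏]
    (P : Measure Ω) (X : ℕ → Ω → 𝕏) (θ : ℝ) (ν : Measure 𝕏) (R : Kernel 𝕏 𝕏) : Prop :=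
  0 < θ ∧ P.map (X 0) = ν ∧
  ∀ n : ℕ, 1 ≤ n → ∀ B : Set 𝕏, MeasurableSet B → ∀ A : Set (Fin n → 𝕏), MeasurableSet A →
    P {ω | (fun i : Fin n => X i ω) ∈ A ∧ X n ω ∈ B} =
      ∫⁻ x in A, ((ENNReal.ofReal θ * ν B + ∑ i : Fin n, R (x i) B)
          / (ENNReal.ofReal θ + (n : ℝ≥0∞)))
        ∂(P.map (fun ω (i : Fin n) => X i ω))

section AuxLemmas

variable {Ω 𝕏 : Type*} [MeasurableSpace Ω] [MeasurableSpace 𝕏]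
  {P : Measure Ω} {X : ℕ → Ω → 𝕏} {ν : Measure 𝕏} {R : Kernel 𝕏 𝕏} {a : ℕ → ℝ}

/-- Pushing forward a `withDensity` measure along a measurable involution that
preserves the base measure. -/
lemma map_withDensity_invol {α : Type*} [MeasurableSpace α]
    (μ : Measure α) (F : α → ℝ≥0∞) (hF : Measurable F)
    (T : α → α) (hT : Measurable T) (hTT : ∀ x, T (T x) = x) (hμ : μ.map T = μ) :
    (μ.withDensity F).map T = μ.withDensity (F ∘ T) := by
  ext s hs
  rw [Measure.map_apply hT hs, withDensity_apply _ (hT hs), withDensity_apply _ hs]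
  calc ∫⁻ x in T ⁻¹' s, F x ∂μ
      = ∫⁻ x in T ⁻¹' s, F (T (T x)) ∂μ := by simp [hTT]
    _ = ∫⁻ y in s, F (T y) ∂(μ.map T) := (setLIntegral_map hs (hF.comp hT) hT).symm
    _ = ∫⁻ y in s, (F ∘ T) y ∂μ := by rw [hμ]; rfl

lemma law2 (hH : HypH P X ν R a) (r : 𝕏 → 𝕏 → ℝ)
    (hr_meas : Measurable fun p : 𝕏 × 𝕏 => r p.1 p.2)
    (hr : ∀ᵐ x ∂ν, (R x : Measure 𝕏) = ν.withDensity fun y => ENNReal.ofReal (r x y)) :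
    P.map (fun ω => (X 0 ω, X 1 ω)) =
      (ν.prod ν).withDensity
        (fun p => ENNReal.ofReal (1 - a 1) + ENNReal.ofReal (a 1) * ENNReal.ofReal (r p.1 p.2)) := by
  haveI := hH.probP; haveI := hH.probν
  have hX := hH.meas
  have hpair : Measurable fun ω => (X 0 ω, X 1 ω) := (hX 0).prodMk (hX 1)
  haveI : IsProbabilityMeasure (P.map fun ω => (X 0 ω, X 1 ω)) :=
    Measure.isProbabilityMeasure_map hpair.aemeasurable
  set f1 : 𝕏 × 𝕏 → ℝ≥0∞ :=
    fun p => ENNReal.ofReal (1 - a 1) + ENNReal.ofReal (a 1) * ENNReal.ofReal (r p.1 p.2) with hf1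
  have mf1 : Measurable f1 := by
    exact measurable_const.add (measurable_const.mul hr_meas.ennreal_ofReal)
  -- rectangle equality
  have hrect : ∀ A₀ : Set 𝕏, MeasurableSet A₀ → ∀ B : Set 𝕏, MeasurableSet B →
      (P.map fun ω => (X 0 ω, X 1 ω)) (A₀ ×ˢ B) = ((ν.prod ν).withDensity f1) (A₀ ×ˢ B) := by
    intro A₀ hA₀ B hB
    have e1meas : Measurable fun x : Fin 1 → 𝕏 => x 0 := measurable_pi_apply 0
    have hseq : Measurable fun ω (i : Fin 1) => X i ω :=
      measurable_pi_lambda _ (fun i => hX i)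
    have hset : (fun ω => (X 0 ω, X 1 ω)) ⁻¹' (A₀ ×ˢ B) =
        {ω | (fun i : Fin 1 => X i ω) ∈ (fun x : Fin 1 → 𝕏 => x 0) ⁻¹' A₀ ∧ X 1 ω ∈ B} := by
      ext ω; simp [Set.mem_prod]
    have hμ1 : (P.map fun ω (i : Fin 1) => X i ω).map (fun x => x 0) = ν := by
      rw [Measure.map_map e1meas hseq]
      exact hH.marginal 0
    obtain ⟨c, hc⟩ : ∃ c : ℝ≥0∞, ν B = c := ⟨_, rfl⟩
    have hG : Measurable fun y => ENNReal.ofReal (1 - a 1) * c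
        + ENNReal.ofReal (a 1) * R y B :=
      measurable_const.add (measurable_const.mul (Kernel.measurable_coe R hB))
    calc (P.map fun ω => (X 0 ω, X 1 ω)) (A₀ ×ˢ B)
        = P {ω | (fun i : Fin 1 => X i ω) ∈ (fun x : Fin 1 → 𝕏 => x 0) ⁻¹' A₀ ∧ X 1 ω ∈ B} := by
          rw [Measure.map_apply hpair (hA₀.prod hB), hset]
      _ = ∫⁻ x in (fun x : Fin 1 → 𝕏 => x 0) ⁻¹' A₀,
            (ENNReal.ofReal (1 - a 1) * ν B
              + (ENNReal.ofReal (a 1) / ((1 : ℕ) : ℝ≥0∞)) * ∑ i : Fin 1, R (x i) B)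
            ∂(P.map fun ω (i : Fin 1) => X i ω) :=
          hH.pred 1 le_rfl B hB _ (e1meas hA₀)
      _ = ∫⁻ x in (fun x : Fin 1 → 𝕏 => x 0) ⁻¹' A₀,
            (ENNReal.ofReal (1 - a 1) * c + ENNReal.ofReal (a 1) * R (x 0) B)
            ∂(P.map fun ω (i : Fin 1) => X i ω) := by
          simp [hc]
      _ = ∫⁻ y in A₀, (ENNReal.ofReal (1 - a 1) * c + ENNReal.ofReal (a 1) * R y B) ∂ν := by
          rw [← hμ1, setLIntegral_map hA₀ hG e1meas]
      _ = ∫⁻ y in A₀, (ENNReal.ofReal (1 - a 1) * ν B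
            + ENNReal.ofReal (a 1) * ∫⁻ z in B, ENNReal.ofReal (r y z) ∂ν) ∂ν := by
          refine lintegral_congr_ae (ae_restrict_of_ae ?_)
          filter_upwards [hr] with y hy
          rw [hy, withDensity_apply _ hB, hc]
      _ = ∫⁻ y in A₀, ∫⁻ z in B, f1 (y, z) ∂ν ∂ν := by
          refine lintegral_congr fun y => ?_
          have mz : Measurable fun z => ENNReal.ofReal (r y z) :=
            (hr_meas.comp measurable_prodMk_left).ennreal_ofReal
          rw [hf1]
          simp only []
          rw [lintegral_add_left measurable_const, setLIntegral_const,
            lintegral_const_mul _ mz]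
      _ = ∫⁻ p in A₀ ×ˢ B, f1 p ∂(ν.prod ν) := by
          rw [← Measure.prod_restrict, lintegral_prod _ mf1.aemeasurable]
      _ = ((ν.prod ν).withDensity f1) (A₀ ×ˢ B) := (withDensity_apply _ (hA₀.prod hB)).symm
  refine ext_of_generate_finite _ generateFrom_prod.symm isPiSystem_prod ?_ ?_
  · rintro s ⟨A₀, hA₀, B, hB, rfl⟩
    exact hrect A₀ hA₀ B hB
  · rw [← Set.univ_prod_univ]
    exact hrect _ MeasurableSet.univ _ MeasurableSet.univ

lemma law3 (hH : HypH P X ν R a) (r : 𝕏 → 𝕏 → ℝ)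
    (hr_meas : Measurable fun p : 𝕏 × 𝕏 => r p.1 p.2)
    (hr : ∀ᵐ x ∂ν, (R x : Measure 𝕏) = ν.withDensity fun y => ENNReal.ofReal (r x y))
    (hlaw2 : P.map (fun ω => (X 0 ω, X 1 ω)) =
      (ν.prod ν).withDensity
        (fun p => ENNReal.ofReal (1 - a 1) + ENNReal.ofReal (a 1) * ENNReal.ofReal (r p.1 p.2))) :
    P.map (fun ω => ((X 0 ω, X 1 ω), X 2 ω)) =
      ((ν.prod ν).prod ν).withDensity
        (fun q => (ENNReal.ofReal (1 - a 1) + ENNReal.ofReal (a 1) * ENNReal.ofReal (r q.1.1 q.1.2))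
          * (ENNReal.ofReal (1 - a 2) + (ENNReal.ofReal (a 2) / 2)
              * (ENNReal.ofReal (r q.1.1 q.2) + ENNReal.ofReal (r q.1.2 q.2)))) := by
  haveI := hH.probP; haveI := hH.probν
  have hX := hH.meas
  have hpair : Measurable fun ω => (X 0 ω, X 1 ω) := (hX 0).prodMk (hX 1)
  have htrip : Measurable fun ω => ((X 0 ω, X 1 ω), X 2 ω) := hpair.prodMk (hX 2)
  haveI : IsProbabilityMeasure (P.map fun ω => ((X 0 ω, X 1 ω), X 2 ω)) :=
    Measure.isProbabilityMeasure_map htrip.aemeasurable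
  set f1 : 𝕏 × 𝕏 → ℝ≥0∞ :=
    fun p => ENNReal.ofReal (1 - a 1) + ENNReal.ofReal (a 1) * ENNReal.ofReal (r p.1 p.2) with hf1
  have mf1 : Measurable f1 :=
    measurable_const.add (measurable_const.mul hr_meas.ennreal_ofReal)
  set F : (𝕏 × 𝕏) × 𝕏 → ℝ≥0∞ :=
    fun q => f1 q.1 * (ENNReal.ofReal (1 - a 2) + (ENNReal.ofReal (a 2) / 2)
        * (ENNReal.ofReal (r q.1.1 q.2) + ENNReal.ofReal (r q.1.2 q.2))) with hF
  have m13 : Measurable fun q : (𝕏 × 𝕏) × 𝕏 => ENNReal.ofReal (r q.1.1 q.2) :=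
    (hr_meas.comp ((measurable_fst.comp measurable_fst).prodMk measurable_snd)).ennreal_ofReal
  have m23 : Measurable fun q : (𝕏 × 𝕏) × 𝕏 => ENNReal.ofReal (r q.1.2 q.2) :=
    (hr_meas.comp ((measurable_snd.comp measurable_fst).prodMk measurable_snd)).ennreal_ofReal
  have mF : Measurable F :=
    (mf1.comp measurable_fst).mul
      (measurable_const.add (measurable_const.mul (m13.add m23)))
  have e2meas : Measurable fun x : Fin 2 → 𝕏 => (x 0, x 1) :=
    (measurable_pi_apply 0).prodMk (measurable_pi_apply 1)
  have hseq : Measurable fun ω (i : Fin 2) => X i ω :=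
    measurable_pi_lambda _ (fun i => hX i)
  have hμ2 : (P.map fun ω (i : Fin 2) => X i ω).map (fun x => (x 0, x 1)) =
      (ν.prod ν).withDensity f1 := by
    rw [Measure.map_map e2meas hseq]
    exact hlaw2
  have hrect : ∀ S : Set (𝕏 × 𝕏), MeasurableSet S → ∀ B : Set 𝕏, MeasurableSet B →
      (P.map fun ω => ((X 0 ω, X 1 ω), X 2 ω)) (S ×ˢ B) =
        (((ν.prod ν).prod ν).withDensity F) (S ×ˢ B) := by
    intro S hS B hB
    obtain ⟨c, hc⟩ : ∃ c : ℝ≥0∞, ν B = c := ⟨_, rfl⟩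
    have hset : (fun ω => ((X 0 ω, X 1 ω), X 2 ω)) ⁻¹' (S ×ˢ B) =
        {ω | (fun i : Fin 2 => X i ω) ∈ (fun x : Fin 2 → 𝕏 => (x 0, x 1)) ⁻¹' S ∧ X 2 ω ∈ B} := by
      ext ω; simp [Set.mem_prod]
    have hG : Measurable fun p : 𝕏 × 𝕏 => ENNReal.ofReal (1 - a 2) * c
        + (ENNReal.ofReal (a 2) / 2) * (R p.1 B + R p.2 B) :=
      measurable_const.add (measurable_const.mul
        (((Kernel.measurable_coe R hB).comp measurable_fst).add
          ((Kernel.measurable_coe R hB).comp measurable_snd)))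
    calc (P.map fun ω => ((X 0 ω, X 1 ω), X 2 ω)) (S ×ˢ B)
        = P {ω | (fun i : Fin 2 => X i ω) ∈ (fun x : Fin 2 → 𝕏 => (x 0, x 1)) ⁻¹' S
            ∧ X 2 ω ∈ B} := by
          rw [Measure.map_apply htrip (hS.prod hB), hset]
      _ = ∫⁻ x in (fun x : Fin 2 → 𝕏 => (x 0, x 1)) ⁻¹' S,
            (ENNReal.ofReal (1 - a 2) * ν B
              + (ENNReal.ofReal (a 2) / ((2 : ℕ) : ℝ≥0∞)) * ∑ i : Fin 2, R (x i) B)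
            ∂(P.map fun ω (i : Fin 2) => X i ω) :=
          hH.pred 2 one_le_two B hB _ (e2meas hS)
      _ = ∫⁻ x in (fun x : Fin 2 → 𝕏 => (x 0, x 1)) ⁻¹' S,
            (ENNReal.ofReal (1 - a 2) * c
              + (ENNReal.ofReal (a 2) / 2) * (R (x 0) B + R (x 1) B))
            ∂(P.map fun ω (i : Fin 2) => X i ω) := by
          simp [hc, Fin.sum_univ_two]
      _ = ∫⁻ p in S, (ENNReal.ofReal (1 - a 2) * c
              + (ENNReal.ofReal (a 2) / 2) * (R p.1 B + R p.2 B))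
            ∂((ν.prod ν).withDensity f1) := by
          rw [← hμ2, setLIntegral_map hS hG e2meas]
      _ = ∫⁻ p in S, f1 p * (ENNReal.ofReal (1 - a 2) * c
              + (ENNReal.ofReal (a 2) / 2) * (R p.1 B + R p.2 B)) ∂(ν.prod ν) := by
          rw [restrict_withDensity hS,
            lintegral_withDensity_eq_lintegral_mul _ mf1 hG]
          rfl
      _ = ∫⁻ p in S, ∫⁻ z in B, F (p, z) ∂ν ∂(ν.prod ν) := by
          refine lintegral_congr_ae (ae_restrict_of_ae ?_)
          have hrB : ∀ᵐ x ∂ν, R x B = ∫⁻ z in B, ENNReal.ofReal (r x z) ∂ν := by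
            filter_upwards [hr] with x hx
            rw [hx, withDensity_apply _ hB]
          have h1 := (Measure.quasiMeasurePreserving_fst (μ := ν) (ν := ν)).tendsto_ae.eventually hrB
          have h2 := (Measure.quasiMeasurePreserving_snd (μ := ν) (ν := ν)).tendsto_ae.eventually hrB
          filter_upwards [h1, h2] with p hp1 hp2
          have mz1 : Measurable fun z => ENNReal.ofReal (r p.1 z) :=
            (hr_meas.comp measurable_prodMk_left).ennreal_ofReal
          have mz2 : Measurable fun z => ENNReal.ofReal (r p.2 z) :=
            (hr_meas.comp measurable_prodMk_left).ennreal_ofReal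
          have : ∫⁻ z in B, (ENNReal.ofReal (1 - a 2) + (ENNReal.ofReal (a 2) / 2)
              * (ENNReal.ofReal (r p.1 z) + ENNReal.ofReal (r p.2 z))) ∂ν
              = ENNReal.ofReal (1 - a 2) * c
                + (ENNReal.ofReal (a 2) / 2) * (R p.1 B + R p.2 B) := by
            rw [lintegral_add_left measurable_const, setLIntegral_const,
              lintegral_const_mul (f := fun z => ENNReal.ofReal (r p.1 z) + ENNReal.ofReal (r p.2 z)) _ (mz1.add mz2), lintegral_add_left mz1, hc, hp1, hp2]
          rw [hF]
          simp only []
          rw [← this]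
          exact (lintegral_const_mul _ (measurable_const.add
            (measurable_const.mul (mz1.add mz2)))).symm
      _ = ∫⁻ q in S ×ˢ B, F q ∂((ν.prod ν).prod ν) := by
          rw [← Measure.prod_restrict, lintegral_prod _ mF.aemeasurable]
      _ = (((ν.prod ν).prod ν).withDensity F) (S ×ˢ B) :=
          (withDensity_apply _ (hS.prod hB)).symm
  refine ext_of_generate_finite _ generateFrom_prod.symm isPiSystem_prod ?_ ?_
  · rintro s ⟨S, hS, B, hB, rfl⟩
    exact hrect S hS B hB
  · rw [← Set.univ_prod_univ]
    exact hrect _ MeasurableSet.univ _ MeasurableSet.univ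

end AuxLemmas
/-- under Hypothesis (H), if `R_x(dy) = r(x,y) ν(dy)` for a jointly
measurable nonnegative `r`, then `r` is symmetric ν⊗ν-a.e. and satisfies
`r(x,y)(r(y,z) - c*) = r(x,z)(r(y,z) - c*)` ν⊗ν⊗ν-a.e. -/


theorem density_identities {Ω 𝕏 : Type*} [MeasurableSpace Ω] [MeasurableSpace 𝕏]
    [StandardBorelSpace 𝕏]
    (P : Measure Ω) (X : ℕ → Ω → 𝕏) (ν : Measure 𝕏) (R : Kernel 𝕏 𝕏) (a : ℕ → ℝ)
    (hH : HypH P X ν R a)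
    (r : 𝕏 → 𝕏 → ℝ) (hr_meas : Measurable fun p : 𝕏 × 𝕏 => r p.1 p.2)
    (hr_nonneg : ∀ x y, 0 ≤ r x y)
    (hr : ∀ᵐ x ∂ν, (R x : Measure 𝕏) = ν.withDensity fun y => ENNReal.ofReal (r x y)) :
    (∀ᵐ p ∂(ν.prod ν), r p.1 p.2 = r p.2 p.1) ∧
      ∀ᵐ p ∂(ν.prod (ν.prod ν)),
        r p.1 p.2.1 * (r p.2.1 p.2.2 - (a 2 - 2 * a 1 + a 1 * a 2) / (a 1 * a 2)) =
          r p.1 p.2.2 * (r p.2.1 p.2.2 - (a 2 - 2 * a 1 + a 1 * a 2) / (a 1 * a 2)) := by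
  haveI := hH.probP; haveI := hH.probν
  have hX := hH.meas
  obtain ⟨ha1₀, ha1₁⟩ := hH.a_mem 1 le_rfl
  obtain ⟨ha2₀, ha2₁⟩ := hH.a_mem 2 one_le_two
  have hlaw2 := law2 hH r hr_meas hr
  set f1 : 𝕏 × 𝕏 → ℝ≥0∞ :=
    fun p => ENNReal.ofReal (1 - a 1) + ENNReal.ofReal (a 1) * ENNReal.ofReal (r p.1 p.2) with hf1
  have mf1 : Measurable f1 :=
    measurable_const.add (measurable_const.mul hr_meas.ennreal_ofReal)
  have hpair : Measurable fun ω => (X 0 ω, X 1 ω) := (hX 0).prodMk (hX 1)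
  have e2meas : Measurable fun x : Fin 2 → 𝕏 => (x 0, x 1) :=
    (measurable_pi_apply 0).prodMk (measurable_pi_apply 1)
  have hseq2 : Measurable fun ω (i : Fin 2) => X i ω :=
    measurable_pi_lambda _ (fun i => hX i)
  have hseq2σ : Measurable fun ω (i : Fin 2) => X (Equiv.swap (0 : Fin 2) 1 i) ω :=
    measurable_pi_lambda _ (fun i => hX _)
  -- symmetry of the two-point law from exchangeability
  have hswap : P.map (fun ω => (X 1 ω, X 0 ω)) = P.map (fun ω => (X 0 ω, X 1 ω)) := by
    have h := hH.exch 2 (Equiv.swap 0 1)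
    calc P.map (fun ω => (X 1 ω, X 0 ω))
        = (P.map (fun ω (i : Fin 2) => X (Equiv.swap (0 : Fin 2) 1 i) ω)).map
            (fun x => (x 0, x 1)) := by
          have h0 : ((Equiv.swap (0 : Fin 2) 1) 0 : ℕ) = 1 := by decide
          have h1 : ((Equiv.swap (0 : Fin 2) 1) 1 : ℕ) = 0 := by decide
          rw [Measure.map_map e2meas hseq2σ]
          try congr 1
          all_goals (funext ω; simp [h0, h1])
      _ = (P.map (fun ω (i : Fin 2) => X i ω)).map (fun x => (x 0, x 1)) := by rw [h]
      _ = P.map (fun ω => (X 0 ω, X 1 ω)) := by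
          rw [Measure.map_map e2meas hseq2]
          try congr 1
          all_goals (funext ω; simp)
  have hmapswap : (P.map (fun ω => (X 0 ω, X 1 ω))).map Prod.swap
      = P.map (fun ω => (X 0 ω, X 1 ω)) := by
    rw [Measure.map_map measurable_swap hpair]
    exact hswap
  have hswapdens : (ν.prod ν).withDensity (f1 ∘ Prod.swap) = (ν.prod ν).withDensity f1 := by
    rw [← map_withDensity_invol (ν.prod ν) f1 mf1 Prod.swap measurable_swap
      (fun x => Prod.swap_swap x) (Measure.measurePreserving_swap ..).map_eq, ← hlaw2]
    exact hmapswap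
  have hsymfun : (f1 ∘ Prod.swap) =ᵐ[ν.prod ν] f1 :=
    (withDensity_eq_iff_of_sigmaFinite (mf1.comp measurable_swap).aemeasurable
      mf1.aemeasurable).mp hswapdens
  have hsym : ∀ᵐ p ∂(ν.prod ν), r p.1 p.2 = r p.2 p.1 := by
    filter_upwards [hsymfun] with p hp
    simp only [hf1, Function.comp_apply, Prod.fst_swap, Prod.snd_swap] at hp
    rw [← ENNReal.ofReal_mul ha1₀.le, ← ENNReal.ofReal_mul ha1₀.le,
      ← ENNReal.ofReal_add (by linarith) (mul_nonneg ha1₀.le (hr_nonneg _ _)),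
      ← ENNReal.ofReal_add (by linarith) (mul_nonneg ha1₀.le (hr_nonneg _ _)),
      ENNReal.ofReal_eq_ofReal_iff
        (by nlinarith [hr_nonneg p.2 p.1]) (by nlinarith [hr_nonneg p.1 p.2])] at hp
    have := mul_left_cancel₀ (ne_of_gt ha1₀) (by linarith : a 1 * r p.2 p.1 = a 1 * r p.1 p.2)
    linarith
  refine ⟨hsym, ?_⟩
  -- Part (ii)
  set c : ℝ := (a 2 - 2 * a 1 + a 1 * a 2) / (a 1 * a 2) with hcdef
  have hlaw3 := law3 hH r hr_meas hr hlaw2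
  set F : (𝕏 × 𝕏) × 𝕏 → ℝ≥0∞ :=
    fun q => (ENNReal.ofReal (1 - a 1) + ENNReal.ofReal (a 1) * ENNReal.ofReal (r q.1.1 q.1.2))
      * (ENNReal.ofReal (1 - a 2) + (ENNReal.ofReal (a 2) / 2)
          * (ENNReal.ofReal (r q.1.1 q.2) + ENNReal.ofReal (r q.1.2 q.2))) with hFdef
  have m13 : Measurable fun q : (𝕏 × 𝕏) × 𝕏 => ENNReal.ofReal (r q.1.1 q.2) :=
    (hr_meas.comp ((measurable_fst.comp measurable_fst).prodMk measurable_snd)).ennreal_ofReal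
  have m23 : Measurable fun q : (𝕏 × 𝕏) × 𝕏 => ENNReal.ofReal (r q.1.2 q.2) :=
    (hr_meas.comp ((measurable_snd.comp measurable_fst).prodMk measurable_snd)).ennreal_ofReal
  have mF : Measurable F :=
    ((mf1.comp measurable_fst).mul
      (measurable_const.add (measurable_const.mul (m13.add m23))))
  set T : (𝕏 × 𝕏) × 𝕏 → (𝕏 × 𝕏) × 𝕏 := fun q => ((q.1.1, q.2), q.1.2) with hTdef
  have hTmeas : Measurable T :=
    (((measurable_fst.comp measurable_fst).prodMk measurable_snd).prodMk
      (measurable_snd.comp measurable_fst))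
  have hTT : ∀ q, T (T q) = q := fun q => rfl
  have hTpres : ((ν.prod ν).prod ν).map T = (ν.prod ν).prod ν := by
    have h1 := measurePreserving_prodAssoc ν ν ν
    have h2 : MeasurePreserving (Prod.map (id : 𝕏 → 𝕏) Prod.swap)
        (ν.prod (ν.prod ν)) (ν.prod (ν.prod ν)) :=
      (MeasurePreserving.id ν).prod (Measure.measurePreserving_swap ..)
    have h3 := (measurePreserving_prodAssoc ν ν ν).symm MeasurableEquiv.prodAssoc
    have hcomp := h3.comp (h2.comp h1)
    have hTeq : T = (⇑(MeasurableEquiv.prodAssoc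
        (α := 𝕏) (β := 𝕏) (γ := 𝕏)).symm ∘ (Prod.map id Prod.swap)
          ∘ ⇑(MeasurableEquiv.prodAssoc (α := 𝕏) (β := 𝕏) (γ := 𝕏))) := rfl
    rw [hTeq]
    exact hcomp.map_eq
  -- exchangeability for the triple
  have htrip : Measurable fun ω => ((X 0 ω, X 1 ω), X 2 ω) := hpair.prodMk (hX 2)
  have e3meas : Measurable fun x : Fin 3 → 𝕏 => ((x 0, x 1), x 2) :=
    ((measurable_pi_apply 0).prodMk (measurable_pi_apply 1)).prodMk (measurable_pi_apply 2)
  have hseq3 : Measurable fun ω (i : Fin 3) => X i ω :=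
    measurable_pi_lambda _ (fun i => hX i)
  have hseq3σ : Measurable fun ω (i : Fin 3) => X (Equiv.swap (1 : Fin 3) 2 i) ω :=
    measurable_pi_lambda _ (fun i => hX _)
  have hmapT : (P.map (fun ω => ((X 0 ω, X 1 ω), X 2 ω))).map T
      = P.map (fun ω => ((X 0 ω, X 1 ω), X 2 ω)) := by
    have h := hH.exch 3 (Equiv.swap 1 2)
    have hσ0 : ((Equiv.swap (1 : Fin 3) 2) 0 : ℕ) = 0 := by decide
    have hσ1 : ((Equiv.swap (1 : Fin 3) 2) 1 : ℕ) = 2 := by decide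
    have hσ2 : ((Equiv.swap (1 : Fin 3) 2) 2 : ℕ) = 1 := by decide
    calc (P.map (fun ω => ((X 0 ω, X 1 ω), X 2 ω))).map T
        = P.map (fun ω => ((X 0 ω, X 2 ω), X 1 ω)) := by
          rw [Measure.map_map hTmeas htrip]
          try congr 1
          all_goals (funext ω; rfl)
      _ = (P.map (fun ω (i : Fin 3) => X (Equiv.swap (1 : Fin 3) 2 i) ω)).map
            (fun x => ((x 0, x 1), x 2)) := by
          rw [Measure.map_map e3meas hseq3σ]
          try congr 1
          all_goals (funext ω; simp [hσ0, hσ1, hσ2])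
      _ = (P.map (fun ω (i : Fin 3) => X i ω)).map (fun x => ((x 0, x 1), x 2)) := by rw [h]
      _ = P.map (fun ω => ((X 0 ω, X 1 ω), X 2 ω)) := by
          rw [Measure.map_map e3meas hseq3]
          try congr 1
          all_goals (funext ω; simp [show ((2 : Fin 3) : ℕ) = 2 from rfl])
  have hdensT : ((ν.prod ν).prod ν).withDensity (F ∘ T)
      = ((ν.prod ν).prod ν).withDensity F := by
    rw [← map_withDensity_invol ((ν.prod ν).prod ν) F mF T hTmeas hTT hTpres, ← hlaw3]
    exact hmapT
  have hFT : (F ∘ T) =ᵐ[(ν.prod ν).prod ν] F :=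
    (withDensity_eq_iff_of_sigmaFinite (mF.comp hTmeas).aemeasurable mF.aemeasurable).mp hdensT
  -- lift the symmetry statement to the triple product
  have hsymq : ∀ᵐ q ∂((ν.prod ν).prod ν), r q.1.2 q.2 = r q.2 q.1.2 := by
    have qmp : Measure.QuasiMeasurePreserving (fun q : (𝕏 × 𝕏) × 𝕏 => (q.1.2, q.2))
        ((ν.prod ν).prod ν) (ν.prod ν) :=
      (Measure.quasiMeasurePreserving_snd (μ := ν) (ν := ν.prod ν)).comp
        (measurePreserving_prodAssoc ν ν ν).quasiMeasurePreserving
    exact qmp.tendsto_ae.eventually hsym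
  -- the conversion of the ENNReal density identity to a real identity
  have hc : c * (a 1 * a 2) = a 2 - 2 * a 1 + a 1 * a 2 := by
    rw [hcdef]
    field_simp
  have hdiv2 : (ENNReal.ofReal (a 2) / 2) = ENNReal.ofReal (a 2 / 2) := by
    rw [ENNReal.ofReal_div_of_pos two_pos, ENNReal.ofReal_ofNat]
  have conv : ∀ A B C : ℝ, 0 ≤ A → 0 ≤ B → 0 ≤ C →
      (ENNReal.ofReal (1 - a 1) + ENNReal.ofReal (a 1) * ENNReal.ofReal A) *
        (ENNReal.ofReal (1 - a 2) + (ENNReal.ofReal (a 2) / 2)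
          * (ENNReal.ofReal B + ENNReal.ofReal C))
      = ENNReal.ofReal (((1 - a 1) + a 1 * A) * ((1 - a 2) + a 2 / 2 * (B + C))) := by
    intro A B C hA hB hC
    have hhalf : (0:ℝ) ≤ a 2 / 2 := by linarith
    rw [hdiv2, ← ENNReal.ofReal_mul ha1₀.le,
      ← ENNReal.ofReal_add (by linarith) (mul_nonneg ha1₀.le hA),
      ← ENNReal.ofReal_add hB hC, ← ENNReal.ofReal_mul hhalf,
      ← ENNReal.ofReal_add (by linarith) (mul_nonneg hhalf (by linarith)),
      ← ENNReal.ofReal_mul (by nlinarith)]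
  have fac1 : ∀ x : ℝ, 0 ≤ x → 0 ≤ 1 - a 1 + a 1 * x := fun x hx => by nlinarith
  have fac2 : ∀ x y : ℝ, 0 ≤ x → 0 ≤ y → 0 ≤ 1 - a 2 + a 2 / 2 * (x + y) := fun x y hx hy => by
    nlinarith
  have key : ∀ᵐ q ∂((ν.prod ν).prod ν),
      r q.1.1 q.1.2 * (r q.1.2 q.2 - c) = r q.1.1 q.2 * (r q.1.2 q.2 - c) := by
    filter_upwards [hFT, hsymq] with q hq hsq
    have hq' : F (T q) = F q := hq
    rw [hFdef] at hq'
    simp only [hTdef, hf1] at hq'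
    set A := r q.1.1 q.1.2 with hA
    set B := r q.1.1 q.2 with hB
    set C := r q.1.2 q.2 with hC
    rw [conv _ _ _ (hr_nonneg _ _) (hr_nonneg _ _) (hr_nonneg _ _),
      conv _ _ _ (hr_nonneg _ _) (hr_nonneg _ _) (hr_nonneg _ _),
      ENNReal.ofReal_eq_ofReal_iff
        (mul_nonneg (fac1 _ (hr_nonneg _ _)) (fac2 _ _ (hr_nonneg _ _) (hr_nonneg _ _)))
        (mul_nonneg (fac1 _ (hr_nonneg _ _)) (fac2 _ _ (hr_nonneg _ _) (hr_nonneg _ _)))] at hq'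
    rw [← hsq] at hq'
    have key0 : (A - B) * (C - c) * (a 1 * a 2) = 0 := by
      linear_combination (-2 : ℝ) * hq' - (A - B) * hc
    have h0 : (A - B) * (C - c) = 0 := by
      rcases mul_eq_zero.mp key0 with h | h
      · exact h
      · exact absurd h (by positivity)
    linear_combination h0
  -- transfer along the associativity equivalence
  have m_a : Measurable fun p : 𝕏 × 𝕏 × 𝕏 => r p.1 p.2.1 :=
    hr_meas.comp (measurable_fst.prodMk (measurable_fst.comp measurable_snd))
  have m_b : Measurable fun p : 𝕏 × 𝕏 × 𝕏 => r p.1 p.2.2 :=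
    hr_meas.comp (measurable_fst.prodMk (measurable_snd.comp measurable_snd))
  have m_c : Measurable fun p : 𝕏 × 𝕏 × 𝕏 => r p.2.1 p.2.2 :=
    hr_meas.comp ((measurable_fst.comp measurable_snd).prodMk
      (measurable_snd.comp measurable_snd))
  have hset : MeasurableSet {p : 𝕏 × 𝕏 × 𝕏 |
      r p.1 p.2.1 * (r p.2.1 p.2.2 - c) = r p.1 p.2.2 * (r p.2.1 p.2.2 - c)} :=
    measurableSet_eq_fun (m_a.mul (m_c.sub measurable_const))
      (m_b.mul (m_c.sub measurable_const))
  rw [← (measurePreserving_prodAssoc ν ν ν).map_eq]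
  exact (ae_map_iff MeasurableEquiv.prodAssoc.measurable.aemeasurable hset).mpr key
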